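/- Let n ≥ 1 and let L : ℝⁿ → ℝ be three times continuously differentiable. Fix w ∈ ℝⁿ with (∂L/∂wᵢ)(w) · |wᵢ| = 0 for every i, and define the symmetric matrix H̃ by H̃ᵢⱼ = (∂²L/∂wᵢ∂wⱼ)(w) · |wᵢ| · |wⱼ|, i.e., H̃ = ∇²L(w) ⊙ (|w||w|ᵀ). If the largest eigenvalue λ_max(H̃) is nonnegative, then lim_{ρ → 0⁺} (2/ρ²) · sup { L(w + γ ⊙ |w|) − L(w) : ‖γ‖₂ ≤ ρ } = λ_max(H̃). -/

import Mathlib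

open Filter

section AuxSharpness

open Set

private lemma quad_approx_sharp {E : Type*} [NormedAddCommGroup E] [NormedSpace ℝ E]
    (f : E → ℝ) (hf : ContDiff ℝ 2 f) (hf0 : f 0 = 0) (hf'0 : fderiv ℝ f 0 = 0)
    {ε : ℝ} (hε : 0 < ε) :
    ∃ δ > 0, ∀ γ : E, ‖γ‖ ≤ δ →
      |f γ - fderiv ℝ (fderiv ℝ f) 0 γ γ / 2| ≤ ε * ‖γ‖ ^ 2 := by
  set B := fderiv ℝ (fderiv ℝ f) 0 with hBdef
  have hsymm : ∀ u v : E, B u v = B v u := fun u v =>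
    (hf.contDiffAt.isSymmSndFDerivAt (by simp)) u v
  have hf1 : ContDiff ℝ 1 (fderiv ℝ f) := hf.fderiv_right (by norm_num)
  have hdiff1 : Differentiable ℝ (fderiv ℝ f) := hf1.differentiable one_ne_zero
  have hcont : ContinuousAt (fderiv ℝ (fderiv ℝ f)) 0 :=
    ((hf1.fderiv_right (m := 0) (by norm_num)).continuous).continuousAt
  obtain ⟨δ, hδ, hδball⟩ := (Metric.continuousAt_iff (f := fderiv ℝ (fderiv ℝ f)) (a := (0:E))).1 hcont ε hε
  refine ⟨δ/2, by positivity, fun γ hγ => ?_⟩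
  set g : E → (E →L[ℝ] ℝ) := fun y => fderiv ℝ f y - B y with hg
  have hgderiv : ∀ y : E, HasFDerivAt g (fderiv ℝ (fderiv ℝ f) y - B) y := fun y =>
    ((hdiff1 y).hasFDerivAt).sub B.hasFDerivAt
  have hgbound : ∀ y ∈ Metric.closedBall (0:E) (δ/2),
      ‖fderiv ℝ (fderiv ℝ f) y - B‖ ≤ ε := by
    intro y hy
    have h1 : dist y 0 < δ := lt_of_le_of_lt (Metric.mem_closedBall.1 hy) (by linarith)
    have h2 := hδball h1
    replace h2 : ‖fderiv ℝ (fderiv ℝ f) y - B‖ < ε := by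
      convert h2 using 1
      exact (dist_eq_norm (E := E →L[ℝ] E →L[ℝ] ℝ) (fderiv ℝ (fderiv ℝ f) y) B).symm
    exact le_of_lt h2
  have hgle : ∀ y ∈ Metric.closedBall (0:E) (δ/2), ‖g y‖ ≤ ε * ‖y‖ := by
    intro y hy
    have h0 : (0:E) ∈ Metric.closedBall (0:E) (δ/2) :=
      Metric.mem_closedBall_self (by positivity)
    have := (convex_closedBall (0:E) (δ/2)).norm_image_sub_le_of_norm_hasFDerivWithin_le
      (fun x _ => (hgderiv x).hasFDerivWithinAt) hgbound h0 hy
    simpa [hg, hf'0] using this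
  have hφderiv : ∀ y : E, HasFDerivAt (fun z => f z - (2⁻¹:ℝ) • (B z z)) (g y) y := by
    intro y
    have h1 : HasFDerivAt (fun z : E => B z z)
        ((B y).comp (ContinuousLinearMap.id ℝ E) + B.flip y) y :=
      B.hasFDerivAt.clm_apply (hasFDerivAt_id y)
    have h2 := h1.const_smul (2⁻¹ : ℝ)
    have h3 := ((hf.differentiable (by norm_num) y).hasFDerivAt).sub h2
    have heq : fderiv ℝ f y -
        (2⁻¹ : ℝ) • ((B y).comp (ContinuousLinearMap.id ℝ E) + B.flip y) = g y := by
      ext v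
      simp only [hg, ContinuousLinearMap.coe_sub', Pi.sub_apply,
        ContinuousLinearMap.smul_apply, ContinuousLinearMap.add_apply,
        ContinuousLinearMap.coe_comp', Function.comp_apply,
        ContinuousLinearMap.coe_id', id_eq, ContinuousLinearMap.flip_apply,
        smul_eq_mul]
      linear_combination ((1:ℝ)/2) * hsymm y v
    rw [heq] at h3; exact h3
  have h0 : (0:E) ∈ Metric.closedBall (0:E) ‖γ‖ := Metric.mem_closedBall_self (norm_nonneg γ)
  have hγs : γ ∈ Metric.closedBall (0:E) ‖γ‖ := by simp
  have hsub : Metric.closedBall (0:E) ‖γ‖ ⊆ Metric.closedBall 0 (δ/2) :=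
    Metric.closedBall_subset_closedBall hγ
  have hmv := (convex_closedBall (0:E) ‖γ‖).norm_image_sub_le_of_norm_hasFDerivWithin_le
      (fun x _ => (hφderiv x).hasFDerivWithinAt)
      (fun x hx => le_trans (hgle x (hsub hx))
        (mul_le_mul_of_nonneg_left (by simpa using Metric.mem_closedBall.1 hx) hε.le))
      h0 hγs
  have hfin : |f γ - (2⁻¹:ℝ) • (B γ γ)| ≤ ε * ‖γ‖ * ‖γ‖ := by
    simpa [hf0, Real.norm_eq_abs] using hmv
  have : f γ - B γ γ / 2 = f γ - (2⁻¹:ℝ) • (B γ γ) := by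
    rw [smul_eq_mul]; ring
  rw [this, pow_two]
  linarith [hfin]

set_option maxHeartbeats 2000000 in
private lemma aux_tendsto_sharp {E : Type*} [NormedAddCommGroup E] [NormedSpace ℝ E]
    (f : E → ℝ) (hf : ContDiff ℝ 2 f) (hf0 : f 0 = 0)
    (hf'0 : fderiv ℝ f 0 = 0)
    (Q : E → ℝ) (hQ : ∀ v, Q v = fderiv ℝ (fderiv ℝ f) 0 v v)
    (hne : ∃ v : E, v ≠ 0)
    (hlam : 0 ≤ sSup {r : ℝ | ∃ v : E, v ≠ 0 ∧ r = Q v / ‖v‖ ^ 2}) :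
    Tendsto (fun ρ : ℝ => (2 / ρ ^ 2) * sSup {s : ℝ | ∃ v : E, ‖v‖ ≤ ρ ∧ s = f v})
      (nhdsWithin 0 (Set.Ioi 0))
      (nhds (sSup {r : ℝ | ∃ v : E, v ≠ 0 ∧ r = Q v / ‖v‖ ^ 2})) := by
  set B := fderiv ℝ (fderiv ℝ f) 0 with hBdef
  set S := {r : ℝ | ∃ v : E, v ≠ 0 ∧ r = Q v / ‖v‖ ^ 2} with hSdef
  set lam := sSup S with hlamdef
  obtain ⟨v₀, hv₀⟩ := hne
  have hSne : S.Nonempty := ⟨Q v₀ / ‖v₀‖ ^ 2, v₀, hv₀, rfl⟩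
  have hSbdd : BddAbove S := by
    refine ⟨‖B‖, fun r hr => ?_⟩
    obtain ⟨v, hv, rfl⟩ := hr
    have hvpos : (0:ℝ) < ‖v‖ := norm_pos_iff.2 hv
    rw [hQ, div_le_iff₀ (by positivity)]
    have h1 : B v v ≤ |B v v| := le_abs_self _
    have h2 : |B v v| ≤ ‖B v‖ * ‖v‖ := (B v).le_opNorm v
    have h3 : ‖B v‖ ≤ ‖B‖ * ‖v‖ := B.le_opNorm v
    have h4 : ‖B v‖ * ‖v‖ ≤ (‖B‖ * ‖v‖) * ‖v‖ :=
      mul_le_mul_of_nonneg_right h3 (norm_nonneg v)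
    nlinarith [norm_nonneg v]
  have hupper : ∀ v : E, B v v ≤ lam * ‖v‖ ^ 2 := by
    intro v
    rcases eq_or_ne v 0 with rfl | hv
    · simp
    · have hvpos : (0:ℝ) < ‖v‖ := norm_pos_iff.2 hv
      have hmem : Q v / ‖v‖ ^ 2 ∈ S := ⟨v, hv, rfl⟩
      have h1 := le_csSup hSbdd hmem
      rw [hQ, div_le_iff₀ (by positivity)] at h1
      exact h1
  have happrox : ∀ η > (0:ℝ), ∃ v : E, v ≠ 0 ∧ (lam - η) * ‖v‖ ^ 2 < B v v := by
    intro η hη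
    obtain ⟨r, hrS, hr⟩ := exists_lt_of_lt_csSup hSne (show lam - η < lam by linarith)
    obtain ⟨v, hv, rfl⟩ := hrS
    have hvpos : (0:ℝ) < ‖v‖ := norm_pos_iff.2 hv
    rw [hQ] at hr
    exact ⟨v, hv, (lt_div_iff₀ (by positivity)).1 hr⟩
  rw [Metric.tendsto_nhdsWithin_nhds]
  intro ε hε
  obtain ⟨δ, hδ, hquad⟩ := quad_approx_sharp f hf hf0 hf'0 (show (0:ℝ) < ε/8 by linarith)
  simp only [← hBdef] at hquad
  refine ⟨δ, hδ, fun ρ hρmem hρd => ?_⟩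
  have hρ : (0:ℝ) < ρ := hρmem
  have hρδ : ρ < δ := by
    rw [Real.dist_eq, sub_zero] at hρd
    exact lt_of_le_of_lt (le_abs_self ρ) hρd
  set T := {s : ℝ | ∃ v : E, ‖v‖ ≤ ρ ∧ s = f v} with hT
  have hub : ∀ s ∈ T, s ≤ lam/2 * ρ^2 + ε/8 * ρ^2 := by
    rintro s ⟨v, hvρ, rfl⟩
    have h1 := hquad v (le_of_lt (lt_of_le_of_lt hvρ hρδ))
    have h4 : ‖v‖^2 ≤ ρ^2 := pow_le_pow_left₀ (norm_nonneg v) hvρ 2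
    have hlam' : (0:ℝ) ≤ lam := hlam
    have h2 : B v v ≤ lam * ρ^2 :=
      le_trans (hupper v) (mul_le_mul_of_nonneg_left h4 hlam')
    have h6 := (abs_le.1 h1).2
    have h7 : ε/8 * ‖v‖^2 ≤ ε/8 * ρ^2 :=
      mul_le_mul_of_nonneg_left h4 (by linarith)
    linarith
  have hTne : T.Nonempty := ⟨f 0, 0, by simp [hρ.le], rfl⟩
  have hTbdd : BddAbove T := ⟨_, hub⟩
  have hMub : sSup T ≤ lam/2 * ρ^2 + ε/8 * ρ^2 := csSup_le hTne hub
  have hMlb : lam/2 * ρ^2 - ε/8 * ρ^2 ≤ sSup T := by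
    refine le_of_forall_pos_le_add fun η hη => ?_
    obtain ⟨v, hv, hvB⟩ := happrox (2*η/ρ^2) (by positivity)
    have hvpos : (0:ℝ) < ‖v‖ := norm_pos_iff.2 hv
    set u := (ρ/‖v‖) • v with hu
    have hunorm : ‖u‖ = ρ := by
      rw [hu, norm_smul, Real.norm_eq_abs, abs_of_pos (by positivity),
        div_mul_cancel₀ _ (ne_of_gt hvpos)]
    have hBu : B u u = (ρ/‖v‖)^2 * (B v v) := by
      rw [hu, map_smul]
      simp only [ContinuousLinearMap.coe_smul', Pi.smul_apply, map_smul, smul_eq_mul]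
      ring
    have humem : f u ∈ T := ⟨u, le_of_eq hunorm, rfl⟩
    have hq := hquad u (by rw [hunorm]; exact hρδ.le)
    rw [hunorm] at hq
    have h6 := abs_le.1 hq
    have hBub : (lam - 2*η/ρ^2) * ρ^2 < B u u := by
      rw [hBu]
      have hkey : (ρ/‖v‖)^2 * ((lam - 2*η/ρ^2) * ‖v‖^2) = (lam - 2*η/ρ^2) * ρ^2 := by
        field_simp
      calc (lam - 2*η/ρ^2) * ρ^2 = (ρ/‖v‖)^2 * ((lam - 2*η/ρ^2) * ‖v‖^2) := hkey.symm
        _ < (ρ/‖v‖)^2 * (B v v) := mul_lt_mul_of_pos_left hvB (by positivity)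
    have hexp : (lam - 2*η/ρ^2) * ρ^2 = lam * ρ^2 - 2*η := by field_simp
    have hfu : lam/2 * ρ^2 - ε/8*ρ^2 - η ≤ f u := by
      have h61 := h6.1
      linarith
    linarith [le_csSup hTbdd humem]
  rw [Real.dist_eq, abs_lt]
  have hρ2 : (0:ℝ) < ρ^2 := by positivity
  have e1 : 2/ρ^2 * (lam/2*ρ^2 + ε/8*ρ^2) = lam + ε/4 := by field_simp; ring
  have e2 : 2/ρ^2 * (lam/2*ρ^2 - ε/8*ρ^2) = lam - ε/4 := by field_simp; ring
  have hx1 : 2/ρ^2 * sSup T ≤ lam + ε/4 := by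
    rw [← e1]; exact mul_le_mul_of_nonneg_left hMub (by positivity)
  have hx2 : lam - ε/4 ≤ 2/ρ^2 * sSup T := by
    rw [← e2]; exact mul_le_mul_of_nonneg_left hMlb (by positivity)
  constructor <;> linarith

noncomputable def sharpA (n : ℕ) (w : Fin n → ℝ) :
    EuclideanSpace ℝ (Fin n) →L[ℝ] (Fin n → ℝ) :=
  LinearMap.toContinuousLinearMap
    { toFun := fun v i => WithLp.equiv 2 (Fin n → ℝ) v i * |w i|
      map_add' := fun x y => by
        funext i
        simp [WithLp.equiv, add_mul]
      map_smul' := fun c x => by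
        funext i
        simp [WithLp.equiv, mul_assoc] }

private lemma sharpA_apply (n : ℕ) (w : Fin n → ℝ) (v : EuclideanSpace ℝ (Fin n)) (i : Fin n) :
    sharpA n w v i = WithLp.equiv 2 (Fin n → ℝ) v i * |w i| := rfl

private lemma pi_expand (n : ℕ) (x : Fin n → ℝ) :
    x = ∑ i, x i • (Pi.single i 1 : Fin n → ℝ) := by
  funext j
  rw [Finset.sum_apply]
  simp [Pi.single_apply]

private lemma sharp_bilin (n : ℕ) (H2 : (Fin n → ℝ) →L[ℝ] (Fin n → ℝ) →L[ℝ] ℝ)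
    (a b : Fin n → ℝ) :
    H2 a b = ∑ i, ∑ j, a i * (H2 (Pi.single i 1) (Pi.single j 1)) * b j := by
  have ha := pi_expand n a
  have hb := pi_expand n b
  calc H2 a b = ∑ i, a i * (H2 (Pi.single i 1) b) := by
        conv_lhs => rw [ha]
        rw [map_sum, ContinuousLinearMap.coe_sum', Finset.sum_apply]
        refine Finset.sum_congr rfl fun i _ => ?_
        rw [map_smul]
        simp
    _ = ∑ i, ∑ j, a i * (H2 (Pi.single i 1) (Pi.single j 1)) * b j := by
        refine Finset.sum_congr rfl fun i _ => ?_
        conv_lhs => rw [hb]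
        rw [map_sum, Finset.mul_sum]
        refine Finset.sum_congr rfl fun j _ => ?_
        rw [map_smul]
        simp only [smul_eq_mul]
        ring

private lemma sharp_f_contDiff (n : ℕ) (L : (Fin n → ℝ) → ℝ) (w : Fin n → ℝ)
    (hL : ContDiff ℝ 3 L) :
    ContDiff ℝ 2 (fun v => L (w + sharpA n w v) - L w) := by
  apply ContDiff.sub _ contDiff_const
  exact (hL.of_le (by norm_num)).comp (contDiff_const.add (sharpA n w).contDiff)

private lemma sharp_hfd (n : ℕ) (L : (Fin n → ℝ) → ℝ) (w : Fin n → ℝ)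
    (hL : ContDiff ℝ 3 L) (v : EuclideanSpace ℝ (Fin n)) :
    HasFDerivAt (fun v => L (w + sharpA n w v) - L w)
      ((fderiv ℝ L (w + sharpA n w v)).comp (sharpA n w)) v := by
  have h1 : HasFDerivAt (fun u : EuclideanSpace ℝ (Fin n) => w + sharpA n w u)
      (sharpA n w) v := ((sharpA n w).hasFDerivAt).const_add w
  have h2 : HasFDerivAt L (fderiv ℝ L (w + sharpA n w v)) (w + sharpA n w v) :=
    ((hL.differentiable (by norm_num)) _).hasFDerivAt
  exact (h2.comp v h1).sub_const (L w)

private lemma sharp_hfd2 (n : ℕ) (L : (Fin n → ℝ) → ℝ) (w : Fin n → ℝ)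
    (hL : ContDiff ℝ 3 L) :
    HasFDerivAt (fderiv ℝ (fun v => L (w + sharpA n w v) - L w))
      ((((ContinuousLinearMap.compL ℝ (EuclideanSpace ℝ (Fin n)) (Fin n → ℝ) ℝ).flip
          (sharpA n w)).comp
        ((fderiv ℝ (fderiv ℝ L) w).comp (sharpA n w)))) 0 := by
  have hLd2 : Differentiable ℝ (fderiv ℝ L) :=
    (hL.fderiv_right (m := 2) (by norm_num)).differentiable (by norm_num)
  have hfe : fderiv ℝ (fun v => L (w + sharpA n w v) - L w) = fun v =>
      ((ContinuousLinearMap.compL ℝ (EuclideanSpace ℝ (Fin n)) (Fin n → ℝ) ℝ).flip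
        (sharpA n w)) (fderiv ℝ L (w + sharpA n w v)) := by
    funext v
    rw [(sharp_hfd n L w hL v).fderiv]
    simp [ContinuousLinearMap.flip_apply, ContinuousLinearMap.compL_apply]
  rw [hfe]
  have hw0 : w + sharpA n w (0 : EuclideanSpace ℝ (Fin n)) = w := by
    rw [map_zero, add_zero]
  have h2 : HasFDerivAt (fderiv ℝ L) (fderiv ℝ (fderiv ℝ L) w)
      (w + sharpA n w (0 : EuclideanSpace ℝ (Fin n))) := by
    rw [hw0]; exact (hLd2 w).hasFDerivAt
  have h3 : HasFDerivAt (fun u : EuclideanSpace ℝ (Fin n) => w + sharpA n w u)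
      (sharpA n w) 0 := ((sharpA n w).hasFDerivAt).const_add w
  have h1 : HasFDerivAt
      (fun v : EuclideanSpace ℝ (Fin n) => fderiv ℝ L (w + sharpA n w v))
      ((fderiv ℝ (fderiv ℝ L) w).comp (sharpA n w)) 0 := h2.comp 0 h3
  exact ((((ContinuousLinearMap.compL ℝ (EuclideanSpace ℝ (Fin n)) (Fin n → ℝ) ℝ).flip
    (sharpA n w))).hasFDerivAt).comp 0 h1

private lemma sharp_B_eq (n : ℕ) (L : (Fin n → ℝ) → ℝ) (w : Fin n → ℝ)
    (hL : ContDiff ℝ 3 L) (u v : EuclideanSpace ℝ (Fin n)) :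
    fderiv ℝ (fderiv ℝ (fun v => L (w + sharpA n w v) - L w)) 0 u v
      = fderiv ℝ (fderiv ℝ L) w (sharpA n w u) (sharpA n w v) := by
  rw [(sharp_hfd2 n L w hL).fderiv]
  simp [ContinuousLinearMap.flip_apply, ContinuousLinearMap.compL_apply]

end AuxSharpness

/-- For the ℓ₂ ball, the worst-case elementwise adaptive sharpness at a critical point of the
rescaled gradient satisfies
`lim_{ρ→0⁺} (2/ρ²) max_{‖γ‖₂ ≤ ρ} (L(w + γ ⊙ |w|) − L(w)) = λ_max(∇²L(w) ⊙ |w||w|ᵀ)`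
whenever that largest eigenvalue (the sup of the Rayleigh quotient) is nonnegative. -/
theorem worst_case_adaptive_sharpness_l2_lambda_max
    (n : ℕ) (hn : 1 ≤ n) (L : (Fin n → ℝ) → ℝ) (hL : ContDiff ℝ 3 L)
    (w : Fin n → ℝ)
    (hcrit : ∀ i, fderiv ℝ L w (Pi.single i 1) * |w i| = 0)
    (hlam : 0 ≤ sSup {r : ℝ | ∃ γ : Fin n → ℝ, γ ≠ 0 ∧
        r = (∑ i, ∑ j, γ i *
              (fderiv ℝ (fun x => fderiv ℝ L x (Pi.single j 1)) w (Pi.single i 1)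
                * (|w i| * |w j|)) * γ j)
            / ‖(WithLp.equiv 2 (Fin n → ℝ)).symm γ‖ ^ 2}) :
    Tendsto (fun ρ : ℝ => (2 / ρ ^ 2) *
        sSup {s : ℝ | ∃ γ : Fin n → ℝ,
          ‖(WithLp.equiv 2 (Fin n → ℝ)).symm γ‖ ≤ ρ ∧
          s = L (w + fun i => γ i * |w i|) - L w})
      (nhdsWithin 0 (Set.Ioi 0))
      (nhds (sSup {r : ℝ | ∃ γ : Fin n → ℝ, γ ≠ 0 ∧
        r = (∑ i, ∑ j, γ i *
              (fderiv ℝ (fun x => fderiv ℝ L x (Pi.single j 1)) w (Pi.single i 1)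
                * (|w i| * |w j|)) * γ j)
            / ‖(WithLp.equiv 2 (Fin n → ℝ)).symm γ‖ ^ 2})) := by
  classical
  have hLd2 : Differentiable ℝ (fderiv ℝ L) :=
    (hL.fderiv_right (m := 2) (by norm_num)).differentiable (by norm_num)
  have hAv : ∀ γ : Fin n → ℝ,
      sharpA n w ((WithLp.equiv 2 (Fin n → ℝ)).symm γ) = fun i => γ i * |w i| := by
    intro γ
    funext i
    rw [sharpA_apply, Equiv.apply_symm_apply]
  have hHij : ∀ i j, fderiv ℝ (fun x => fderiv ℝ L x (Pi.single j 1)) w (Pi.single i 1)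
      = fderiv ℝ (fderiv ℝ L) w (Pi.single i 1) (Pi.single j 1) := by
    intro i j
    have h1 := fderiv_clm_apply (c := fderiv ℝ L) (u := fun _ => Pi.single j 1)
      (x := w) (hLd2 w) (differentiableAt_const _)
    rw [h1]
    simp
  have hnum : ∀ γ : Fin n → ℝ,
      (∑ i, ∑ j, γ i *
        (fderiv ℝ (fun x => fderiv ℝ L x (Pi.single j 1)) w (Pi.single i 1)
          * (|w i| * |w j|)) * γ j)
      = fderiv ℝ (fderiv ℝ L) w
          (sharpA n w ((WithLp.equiv 2 (Fin n → ℝ)).symm γ))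
          (sharpA n w ((WithLp.equiv 2 (Fin n → ℝ)).symm γ)) := by
    intro γ
    rw [sharp_bilin n (fderiv ℝ (fderiv ℝ L) w)]
    refine Finset.sum_congr rfl fun i _ => Finset.sum_congr rfl fun j _ => ?_
    rw [hHij i j]
    have hi := congrFun (hAv γ) i
    have hj := congrFun (hAv γ) j
    rw [hi, hj]
    ring
  have hzero_iff : ∀ γ : Fin n → ℝ,
      (WithLp.equiv 2 (Fin n → ℝ)).symm γ = 0 ↔ γ = 0 := by
    intro γ
    constructor
    · intro h
      have h2 := congrArg (WithLp.equiv 2 (Fin n → ℝ)) h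
      rw [Equiv.apply_symm_apply] at h2; exact h2
    · intro h
      rw [h]; rfl
  have hsetS : {r : ℝ | ∃ γ : Fin n → ℝ, γ ≠ 0 ∧
        r = (∑ i, ∑ j, γ i *
              (fderiv ℝ (fun x => fderiv ℝ L x (Pi.single j 1)) w (Pi.single i 1)
                * (|w i| * |w j|)) * γ j)
            / ‖(WithLp.equiv 2 (Fin n → ℝ)).symm γ‖ ^ 2}
      = {r : ℝ | ∃ v : EuclideanSpace ℝ (Fin n), v ≠ 0 ∧
          r = (fun u => fderiv ℝ (fderiv ℝ L) w (sharpA n w u) (sharpA n w u)) v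
            / ‖v‖ ^ 2} := by
    ext r
    simp only [Set.mem_setOf_eq]
    constructor
    · rintro ⟨γ, hγ, rfl⟩
      exact ⟨(WithLp.equiv 2 (Fin n → ℝ)).symm γ, fun h => hγ ((hzero_iff γ).1 h),
        by rw [hnum γ]⟩
    · rintro ⟨v, hv, rfl⟩
      refine ⟨WithLp.equiv 2 (Fin n → ℝ) v, fun h => hv ?_, ?_⟩
      · have h2 := (hzero_iff (WithLp.equiv 2 (Fin n → ℝ) v)).2 h
        rwa [Equiv.symm_apply_apply] at h2
      · rw [hnum (WithLp.equiv 2 (Fin n → ℝ) v), Equiv.symm_apply_apply]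
  have hsetT : ∀ ρ : ℝ, {s : ℝ | ∃ γ : Fin n → ℝ,
        ‖(WithLp.equiv 2 (Fin n → ℝ)).symm γ‖ ≤ ρ ∧
        s = L (w + fun i => γ i * |w i|) - L w}
      = {s : ℝ | ∃ v : EuclideanSpace ℝ (Fin n), ‖v‖ ≤ ρ ∧
          s = (fun u => L (w + sharpA n w u) - L w) v} := by
    intro ρ
    ext s
    simp only [Set.mem_setOf_eq]
    constructor
    · rintro ⟨γ, hγ, rfl⟩
      exact ⟨(WithLp.equiv 2 (Fin n → ℝ)).symm γ, hγ, by rw [hAv γ]⟩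
    · rintro ⟨v, hv, rfl⟩
      refine ⟨WithLp.equiv 2 (Fin n → ℝ) v, by rwa [Equiv.symm_apply_apply], ?_⟩
      have h2 := hAv (WithLp.equiv 2 (Fin n → ℝ) v)
      rw [Equiv.symm_apply_apply] at h2
      rw [h2]
  rw [hsetS] at hlam ⊢
  simp only [hsetT]
  have hf0 : (fun v => L (w + sharpA n w v) - L w) 0 = 0 := by
    simp only [map_zero, add_zero, sub_self]
  have hLA0 : ∀ x : EuclideanSpace ℝ (Fin n), fderiv ℝ L w (sharpA n w x) = 0 := by
    intro x
    have hx := pi_expand n (sharpA n w x)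
    rw [hx, map_sum]
    refine Finset.sum_eq_zero fun i _ => ?_
    rw [map_smul, smul_eq_mul, sharpA_apply]
    calc WithLp.equiv 2 (Fin n → ℝ) x i * |w i| * fderiv ℝ L w (Pi.single i 1)
        = WithLp.equiv 2 (Fin n → ℝ) x i
            * (fderiv ℝ L w (Pi.single i 1) * |w i|) := by ring
      _ = 0 := by rw [hcrit i, mul_zero]
  have hgrad0 : fderiv ℝ (fun v => L (w + sharpA n w v) - L w) 0 = 0 := by
    rw [(sharp_hfd n L w hL 0).fderiv]
    rw [(sharpA n w).map_zero, add_zero]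
    ext v
    simp only [ContinuousLinearMap.coe_comp', Function.comp_apply,
      ContinuousLinearMap.zero_apply]
    exact hLA0 v
  have hne : ∃ v : EuclideanSpace ℝ (Fin n), v ≠ 0 := by
    refine ⟨(WithLp.equiv 2 (Fin n → ℝ)).symm (Pi.single ⟨0, hn⟩ 1), fun h => ?_⟩
    have h2 := (hzero_iff _).1 h
    have h3 := congrFun h2 ⟨0, hn⟩
    rw [Pi.single_eq_same] at h3
    exact one_ne_zero h3
  exact aux_tendsto_sharp (fun v => L (w + sharpA n w v) - L w)
    (sharp_f_contDiff n L w hL) hf0 hgrad0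
    (fun u => fderiv ℝ (fderiv ℝ L) w (sharpA n w u) (sharpA n w u))
    (fun v => (sharp_B_eq n L w hL v v).symm) hne hlam
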